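/- Let c ≥ 1 and p ∈ [1,∞] be fixed, and let K_λ be given by K_λ(x) := λ^{−9/(4c)} (1 + (λ^κ | |x|_c^c − λ|)^{10})^{−1} with κ = 3/(4c) − 1 and |x|_c^c = |x₁|^c+|x₂|^c+|x₃|^c. For f : ℤ³ → ℂ define its extension F_f : ℝ³ → ℂ by F_f(x) := Σ_{y∈ℤ³} f(y) 𝟙_{[−1/2,1/2)³}(x−y). Then there is a constant C > 0 such that for every subset 𝕀 ⊆ [1,∞) and every f : ℤ³ → ℂ, ‖ sup_{λ∈𝕀} |K_λ ∗ f| ‖_{ℓ^p(ℤ³)} ≤ C ‖ sup_{λ∈𝕀} K_λ ∗ |F_f| ‖_{L^p(ℝ³)}, where K_λ ∗ f(x) = Σ_{y∈ℤ³} K_λ(x−y) f(y) on ℤ³ and K_λ ∗ |F_f|(x) = ∫_{ℝ³} K_λ(x−y) |F_f(y)| dy on ℝ³. -/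

import Mathlib

open Real MeasureTheory

/-- The major-arc kernel
`K_λ(x) = λ^{−9/(4c)} (1 + (λ^κ | |x|_c^c − λ|)^{10})⁻¹` with `κ = 3/(4c) − 1`. -/
noncomputable def majorKernel (c lam : ℝ) (x : ℝ × ℝ × ℝ) : ℝ :=
  lam ^ (-(9 : ℝ) / (4 * c)) *
    (1 + (lam ^ (3 / (4 * c) - 1) *
        |(|x.1| ^ c + |x.2.1| ^ c + |x.2.2| ^ c) - lam|) ^ 10)⁻¹

/-- The extension `F_f(x) = Σ_{y∈ℤ³} f(y) 𝟙_{[−1/2,1/2)³}(x−y)` of `f : ℤ³ → ℂ` to `ℝ³`. -/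
noncomputable def latticeExtension (f : ℤ × ℤ × ℤ → ℂ) (x : ℝ × ℝ × ℝ) : ℂ :=
  ∑' y : ℤ × ℤ × ℤ,
    if (-(1 : ℝ) / 2 ≤ x.1 - (y.1 : ℝ) ∧ x.1 - (y.1 : ℝ) < 1 / 2) ∧
        (-(1 : ℝ) / 2 ≤ x.2.1 - (y.2.1 : ℝ) ∧ x.2.1 - (y.2.1 : ℝ) < 1 / 2) ∧
        (-(1 : ℝ) / 2 ≤ x.2.2 - (y.2.2 : ℝ) ∧ x.2.2 - (y.2.2 : ℝ) < 1 / 2)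
    then f y else 0

/-- The `L^p` norm (with values in `ℝ≥0∞`) of an `ℝ≥0∞`-valued function,
covering also `p = ∞` via the essential supremum. -/
noncomputable def lpNormE {α : Type*} [MeasurableSpace α] (g : α → ENNReal)
    (p : ENNReal) (μ : Measure α) : ENNReal :=
  if p = ⊤ then essSup g μ else (∫⁻ x, g x ^ p.toReal ∂μ) ^ (1 / p.toReal)

set_option maxHeartbeats 1000000

open scoped ENNReal NNReal

lemma rpow_sub_rpow_le' {c x y : ℝ} (hc : 1 ≤ c) (hy : 0 ≤ y) (hxy : y ≤ x) :
    x ^ c - y ^ c ≤ c * x ^ (c - 1) * (x - y) := by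
  rcases eq_or_lt_of_le (hy.trans hxy) with h0 | h0
  · have hx0 : x = 0 := h0.symm
    have hy0 : y = 0 := le_antisymm (hx0 ▸ hxy) hy
    simp [hx0, hy0, Real.zero_rpow (by linarith : c ≠ 0)]
  · set t := y / x with ht
    have ht0 : 0 ≤ t := div_nonneg hy h0.le
    have ht1 : t ≤ 1 := (div_le_one h0).2 hxy
    have hB := one_add_mul_self_le_rpow_one_add (by linarith : (-1:ℝ) ≤ t - 1) hc
    rw [show (1 : ℝ) + (t - 1) = t by ring] at hB
    have hyx : y = t * x := by rw [ht, div_mul_cancel₀]; exact h0.ne'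
    have hyc : y ^ c = t ^ c * x ^ c := by rw [hyx, Real.mul_rpow ht0 h0.le]
    have hxc : x ^ (c - 1) * x = x ^ c := by
      nth_rewrite 2 [← Real.rpow_one x]
      rw [← Real.rpow_add h0]; ring_nf
    calc x ^ c - y ^ c = x ^ c * (1 - t ^ c) := by rw [hyc]; ring
      _ ≤ x ^ c * (c * (1 - t)) := by
          apply mul_le_mul_of_nonneg_left (by linarith) (Real.rpow_nonneg h0.le c)
      _ = c * x ^ (c - 1) * (x - y) := by rw [← hxc, hyx]; ring

lemma abs_rpow_abs_sub {c : ℝ} (hc : 1 ≤ c) (a b : ℝ) (hb : |b| ≤ 1) :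
    abs (|a + b| ^ c - |a| ^ c) ≤ c * (|a| + 1) ^ (c - 1) := by
  set p := |a| with hp
  set q := |a + b| with hq
  have hp0 : 0 ≤ p := abs_nonneg _
  have hq0 : 0 ≤ q := abs_nonneg _
  have hpq : |q - p| ≤ 1 := le_trans (abs_abs_sub_abs_le_abs_sub _ _) (by simpa using hb)
  have hmono : p ^ (c - 1) ≤ (p + 1) ^ (c - 1) :=
    Real.rpow_le_rpow hp0 (by linarith) (by linarith)
  have hc0 : 0 ≤ c := by linarith
  rcases le_total q p with h | h
  · have h1 : q ^ c ≤ p ^ c := Real.rpow_le_rpow hq0 h hc0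
    have h2 : p ^ c - q ^ c ≤ c * p ^ (c - 1) * (p - q) := rpow_sub_rpow_le' hc hq0 h
    rw [abs_sub_comm, abs_of_nonneg (by linarith)]
    have hd : p - q ≤ 1 := by rw [abs_le] at hpq; linarith
    nlinarith [Real.rpow_nonneg hp0 (c - 1), mul_nonneg hc0 (Real.rpow_nonneg hp0 (c-1))]
  · have h2 : q ^ c - p ^ c ≤ c * q ^ (c - 1) * (q - p) := rpow_sub_rpow_le' hc hp0 h
    have hqp1 : q ≤ p + 1 := by rw [abs_le] at hpq; linarith
    have hmono2 : q ^ (c - 1) ≤ (p + 1) ^ (c - 1) :=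
      Real.rpow_le_rpow hq0 hqp1 (by linarith)
    have h1 : p ^ c ≤ q ^ c := Real.rpow_le_rpow hp0 h hc0
    rw [abs_of_nonneg (by linarith)]
    have hd : q - p ≤ 1 := by rw [abs_le] at hpq; linarith
    nlinarith [Real.rpow_nonneg hq0 (c - 1), mul_nonneg hc0 (Real.rpow_nonneg hq0 (c-1))]

lemma real_rpow_add_le {a b p : ℝ} (ha : 0 ≤ a) (hb : 0 ≤ b) (hp0 : 0 ≤ p) (hp1 : p ≤ 1) :
    (a + b) ^ p ≤ a ^ p + b ^ p := by
  lift a to NNReal using ha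
  lift b to NNReal using hb
  have := NNReal.rpow_add_le_add_rpow a b hp0 hp1
  exact_mod_cast this


noncomputable def Ccomp (c : ℝ) : ℝ := 1 + (2 * (1 + 3 * c * 2 ^ c)) ^ 10

lemma Ccomp_pos {c : ℝ} (hc : 1 ≤ c) : 0 < Ccomp c := by
  have : (0:ℝ) ≤ (2 * (1 + 3 * c * 2 ^ c)) ^ 10 := by positivity
  unfold Ccomp; linarith

-- the key argument-comparison: B' ≤ M (1 + B)
lemma arg_bound {c lam : ℝ} (hc : 1 ≤ c) (hlam : 1 ≤ lam)
    (u w : ℝ × ℝ × ℝ) (h1 : |w.1| ≤ 1) (h2 : |w.2.1| ≤ 1) (h3 : |w.2.2| ≤ 1) :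
    lam ^ (3 / (4 * c) - 1) *
      |(|u.1 + w.1| ^ c + |u.2.1 + w.2.1| ^ c + |u.2.2 + w.2.2| ^ c) - lam| ≤
    (1 + 3 * c * 2 ^ c) *
      (1 + lam ^ (3 / (4 * c) - 1) *
        |(|u.1| ^ c + |u.2.1| ^ c + |u.2.2| ^ c) - lam|) := by
  have hc0 : (0:ℝ) < c := by linarith
  have hlam0 : (0:ℝ) < lam := by linarith
  set κ := 3 / (4 * c) - 1 with hκ
  have hκneg : κ ≤ 0 := by
    rw [hκ]; have : 3 / (4 * c) ≤ 3 / 4 := by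
      apply div_le_div_of_nonneg_left (by norm_num) (by norm_num) (by linarith)
    linarith
  set S := |u.1| ^ c + |u.2.1| ^ c + |u.2.2| ^ c with hS
  set S' := |u.1 + w.1| ^ c + |u.2.1 + w.2.1| ^ c + |u.2.2 + w.2.2| ^ c with hS'
  set A := |S - lam| with hA
  set B := lam ^ κ * A with hB
  have hA0 : 0 ≤ A := abs_nonneg _
  have hlκ : 0 < lam ^ κ := Real.rpow_pos_of_pos hlam0 κ
  have hB0 : 0 ≤ B := mul_nonneg hlκ.le hA0
  -- per-coordinate bound on |u.i|
  have hui : ∀ x : ℝ, |x| ^ c ≤ S → (|x| + 1) ^ (c - 1) ≤ 2 ^ (c - 1) * (lam + A) ^ ((c-1)/c) := by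
    intro x hx
    have hSle : S ≤ lam + A := by
      have := le_abs_self (S - lam); rw [← hA] at this; linarith
    have hlA1 : (1:ℝ) ≤ lam + A := by linarith
    have hxc : |x| ^ c ≤ lam + A := hx.trans hSle
    have hxle : |x| ≤ (lam + A) ^ (1/c : ℝ) := by
      have h1 : |x| = (|x| ^ c) ^ (1/c : ℝ) := by
        rw [one_div, Real.rpow_rpow_inv (abs_nonneg x) (ne_of_gt hc0)]
      rw [h1]
      exact Real.rpow_le_rpow (Real.rpow_nonneg (abs_nonneg x) c) hxc (by positivity)
    have h1le : (1:ℝ) ≤ (lam + A) ^ (1/c : ℝ) :=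
      Real.one_le_rpow hlA1 (by positivity)
    have : (|x| + 1) ^ (c-1) ≤ (2 * (lam + A) ^ (1/c:ℝ)) ^ (c-1) := by
      apply Real.rpow_le_rpow (by positivity) (by linarith) (by linarith)
    calc (|x| + 1) ^ (c-1) ≤ (2 * (lam + A) ^ (1/c:ℝ)) ^ (c-1) := this
      _ = 2 ^ (c-1) * ((lam + A) ^ (1/c:ℝ)) ^ (c-1) :=
          Real.mul_rpow (by norm_num) (by positivity)
      _ = 2 ^ (c-1) * (lam + A) ^ ((c-1)/c) := by
          rw [← Real.rpow_mul (by positivity)]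
          congr 1; ring
  set θ := (c - 1) / c with hθ
  have hθ0 : 0 ≤ θ := div_nonneg (by linarith) hc0.le
  have hθ1 : θ ≤ 1 := by rw [hθ, div_le_one hc0]; linarith
  -- bound each coordinate's contribution
  have e1 : (|u.1| + 1) ^ (c-1) ≤ 2 ^ (c-1) * (lam + A) ^ θ := by
    apply hui; rw [hS]; nlinarith [Real.rpow_nonneg (abs_nonneg u.2.1) c,
      Real.rpow_nonneg (abs_nonneg u.2.2) c]
  have e2 : (|u.2.1| + 1) ^ (c-1) ≤ 2 ^ (c-1) * (lam + A) ^ θ := by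
    apply hui; rw [hS]; nlinarith [Real.rpow_nonneg (abs_nonneg u.1) c,
      Real.rpow_nonneg (abs_nonneg u.2.2) c]
  have e3 : (|u.2.2| + 1) ^ (c-1) ≤ 2 ^ (c-1) * (lam + A) ^ θ := by
    apply hui; rw [hS]; nlinarith [Real.rpow_nonneg (abs_nonneg u.1) c,
      Real.rpow_nonneg (abs_nonneg u.2.1) c]
  have hd1 := abs_rpow_abs_sub hc u.1 w.1 h1
  have hd2 := abs_rpow_abs_sub hc u.2.1 w.2.1 h2
  have hd3 := abs_rpow_abs_sub hc u.2.2 w.2.2 h3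
  have hc0' : (0:ℝ) ≤ c := hc0.le
  have hΔ : |S' - S| ≤ 3 * c * (2 ^ (c-1) * (lam + A) ^ θ) := by
    have t1 : |S' - S| ≤ abs (|u.1 + w.1| ^ c - |u.1| ^ c) +
        abs (|u.2.1 + w.2.1| ^ c - |u.2.1| ^ c) + abs (|u.2.2 + w.2.2| ^ c - |u.2.2| ^ c) := by
      rw [hS', hS]
      calc |(|u.1 + w.1| ^ c + |u.2.1 + w.2.1| ^ c + |u.2.2 + w.2.2| ^ c) -
            (|u.1| ^ c + |u.2.1| ^ c + |u.2.2| ^ c)|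
          = |(|u.1 + w.1| ^ c - |u.1| ^ c) + ((|u.2.1 + w.2.1| ^ c - |u.2.1| ^ c) +
              (|u.2.2 + w.2.2| ^ c - |u.2.2| ^ c))| := by ring_nf
        _ ≤ _ := by
            refine (abs_add_le _ _).trans ?_
            have := abs_add_le (|u.2.1 + w.2.1| ^ c - |u.2.1| ^ c)
              (|u.2.2 + w.2.2| ^ c - |u.2.2| ^ c)
            linarith
    have m1 : c * (|u.1| + 1) ^ (c-1) ≤ c * (2 ^ (c-1) * (lam + A) ^ θ) :=
      mul_le_mul_of_nonneg_left e1 hc0'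
    have m2 : c * (|u.2.1| + 1) ^ (c-1) ≤ c * (2 ^ (c-1) * (lam + A) ^ θ) :=
      mul_le_mul_of_nonneg_left e2 hc0'
    have m3 : c * (|u.2.2| + 1) ^ (c-1) ≤ c * (2 ^ (c-1) * (lam + A) ^ θ) :=
      mul_le_mul_of_nonneg_left e3 hc0'
    linarith
  -- lam^κ * (lam+A)^θ ≤ 2 + B
  have hsplit : (lam + A) ^ θ ≤ lam ^ θ + A ^ θ := real_rpow_add_le hlam0.le hA0 hθ0 hθ1
  have hκθ : lam ^ κ * lam ^ θ ≤ 1 := by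
    rw [← Real.rpow_add hlam0]
    apply Real.rpow_le_one_of_one_le_of_nonpos hlam
    have : κ + θ = -1 / (4 * c) := by rw [hκ, hθ]; field_simp; ring
    rw [this]
    apply div_nonpos_of_nonpos_of_nonneg <;> linarith
  have hκA : lam ^ κ * A ^ θ ≤ 1 + B := by
    have key : B ^ θ * lam ^ (κ * (1 - θ)) = lam ^ κ * A ^ θ := by
      rw [hB, Real.mul_rpow hlκ.le hA0, ← Real.rpow_mul hlam0.le,
        mul_comm (lam ^ (κ * θ)) (A ^ θ), mul_assoc, ← Real.rpow_add hlam0,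
        show κ * θ + κ * (1 - θ) = κ by ring]
      ring
    rw [← key]
    have hl1 : lam ^ (κ * (1 - θ)) ≤ 1 :=
      Real.rpow_le_one_of_one_le_of_nonpos hlam (mul_nonpos_of_nonpos_of_nonneg hκneg (by linarith))
    have hBθ : B ^ θ ≤ 1 + B := by
      rcases le_total B 1 with hb | hb
      · have := Real.rpow_le_one hB0 hb hθ0; linarith
      · have := Real.rpow_le_rpow_of_exponent_le hb hθ1
        rw [Real.rpow_one] at this; linarith
    calc B ^ θ * lam ^ (κ * (1 - θ)) ≤ B ^ θ * 1 :=
          mul_le_mul_of_nonneg_left hl1 (Real.rpow_nonneg hB0 θ)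
      _ = B ^ θ := mul_one _
      _ ≤ 1 + B := hBθ
  -- assemble
  have hA' : |S' - lam| ≤ A + |S' - S| := by
    rw [hA]; have := abs_add_le (S - lam) (S' - S)
    rw [show S - lam + (S' - S) = S' - lam by ring] at this
    linarith [this]
  have hlΔ : lam ^ κ * |S' - S| ≤ 3 * c * 2 ^ (c-1) * (2 + B) := by
    have step : lam ^ κ * |S' - S| ≤ lam ^ κ * (3 * c * (2 ^ (c-1) * (lam + A) ^ θ)) :=
      mul_le_mul_of_nonneg_left hΔ hlκ.le
    have step2 : lam ^ κ * (lam + A) ^ θ ≤ 2 + B := by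
      calc lam ^ κ * (lam + A) ^ θ ≤ lam ^ κ * (lam ^ θ + A ^ θ) :=
            mul_le_mul_of_nonneg_left hsplit hlκ.le
        _ = lam ^ κ * lam ^ θ + lam ^ κ * A ^ θ := by ring
        _ ≤ 1 + (1 + B) := add_le_add hκθ hκA
        _ = 2 + B := by ring
    have h2c1 : (0:ℝ) ≤ 2 ^ (c-1) := Real.rpow_nonneg (by norm_num) _
    nlinarith [mul_nonneg (mul_nonneg (by linarith : (0:ℝ) ≤ 3*c) h2c1)
      (sub_nonneg.2 step2)]
  have final : lam ^ κ * |S' - lam| ≤ B + 3 * c * 2 ^ (c-1) * (2 + B) := by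
    have := mul_le_mul_of_nonneg_left hA' hlκ.le
    rw [mul_add, ← hB] at this
    linarith
  have h2c : (2:ℝ) ^ c = 2 * 2 ^ (c-1) := by
    have h := Real.rpow_add (by norm_num : (0:ℝ) < 2) 1 (c-1)
    rw [show (1:ℝ) + (c-1) = c from by ring, Real.rpow_one] at h
    exact h
  have h2c1 : (0:ℝ) ≤ 2 ^ (c-1) := Real.rpow_nonneg (by norm_num) _
  calc lam ^ κ * |S' - lam| ≤ B + 3 * c * 2 ^ (c-1) * (2 + B) := final
    _ ≤ (1 + 3 * c * 2 ^ c) * (1 + B) := by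
        rw [h2c]
        nlinarith [mul_nonneg (mul_nonneg hc0' h2c1) hB0]

lemma one_add_pow_le {B : ℝ} (hB : 0 ≤ B) : (1 + B) ^ 10 ≤ 2 ^ 10 * (1 + B ^ 10) := by
  rcases le_total B 1 with h | h
  · have : (1 + B) ^ 10 ≤ (2:ℝ) ^ 10 := pow_le_pow_left₀ (by linarith) (by linarith) 10
    nlinarith [pow_nonneg hB 10]
  · have : (1 + B) ^ 10 ≤ (2 * B) ^ 10 := pow_le_pow_left₀ (by linarith) (by linarith) 10
    rw [mul_pow] at this
    nlinarith [pow_nonneg hB 10]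

lemma majorKernel_comp {c lam : ℝ} (hc : 1 ≤ c) (hlam : 1 ≤ lam)
    (u w : ℝ × ℝ × ℝ) (h1 : |w.1| ≤ 1) (h2 : |w.2.1| ≤ 1) (h3 : |w.2.2| ≤ 1) :
    majorKernel c lam u ≤ Ccomp c * majorKernel c lam (u + w) := by
  have hc0 : (0:ℝ) < c := by linarith
  have hlam0 : (0:ℝ) < lam := by linarith
  set κ := 3 / (4 * c) - 1 with hκ
  set B := lam ^ κ * |(|u.1| ^ c + |u.2.1| ^ c + |u.2.2| ^ c) - lam| with hBdef
  set B' := lam ^ κ * |(|u.1 + w.1| ^ c + |u.2.1 + w.2.1| ^ c + |u.2.2 + w.2.2| ^ c) - lam|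
    with hB'def
  have hB0 : 0 ≤ B := mul_nonneg (Real.rpow_nonneg hlam0.le κ) (abs_nonneg _)
  have hB'0 : 0 ≤ B' := mul_nonneg (Real.rpow_nonneg hlam0.le κ) (abs_nonneg _)
  set M := 1 + 3 * c * 2 ^ c with hM
  have hM1 : (1:ℝ) ≤ M := by
    have : (0:ℝ) ≤ 3 * c * 2 ^ c := by positivity
    linarith
  have hkey : B' ≤ M * (1 + B) := arg_bound hc hlam u w h1 h2 h3
  have hM0 : (0:ℝ) ≤ M := by linarith
  have hpow : B' ^ 10 ≤ (2 * M) ^ 10 * (1 + B ^ 10) := by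
    have s1 : B' ^ 10 ≤ (M * (1 + B)) ^ 10 := pow_le_pow_left₀ hB'0 hkey 10
    rw [mul_pow M (1 + B)] at s1
    have s2 : (1 + B) ^ 10 ≤ 2 ^ 10 * (1 + B ^ 10) := one_add_pow_le hB0
    have s3 : M ^ 10 * (1 + B) ^ 10 ≤ M ^ 10 * (2 ^ 10 * (1 + B ^ 10)) :=
      mul_le_mul_of_nonneg_left s2 (pow_nonneg hM0 10)
    calc B' ^ 10 ≤ M ^ 10 * (1 + B) ^ 10 := s1
      _ ≤ M ^ 10 * (2 ^ 10 * (1 + B ^ 10)) := s3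
      _ = (2 * M) ^ 10 * (1 + B ^ 10) := by rw [mul_pow 2 M]; ring
  have hCineq : 1 + B' ^ 10 ≤ Ccomp c * (1 + B ^ 10) := by
    have hpB : (0:ℝ) ≤ B ^ 10 := pow_nonneg hB0 10
    unfold Ccomp
    rw [← hM]
    nlinarith [pow_nonneg (by linarith : (0:ℝ) ≤ 2 * M) 10]
  have hx : (0:ℝ) < 1 + B ^ 10 := by positivity
  have hy : (0:ℝ) < 1 + B' ^ 10 := by positivity
  have hinv : (1 + B ^ 10)⁻¹ ≤ Ccomp c * (1 + B' ^ 10)⁻¹ := by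
    rw [show Ccomp c * (1 + B' ^ 10)⁻¹ = Ccomp c / (1 + B' ^ 10) from
      (div_eq_mul_inv _ _).symm, inv_eq_one_div, div_le_div_iff₀ hx hy]
    rw [one_mul]; exact hCineq
  have hpre : (0:ℝ) ≤ lam ^ (-(9:ℝ) / (4 * c)) := Real.rpow_nonneg hlam0.le _
  show lam ^ (-(9:ℝ) / (4 * c)) * (1 + B ^ 10)⁻¹ ≤
    Ccomp c * (lam ^ (-(9:ℝ) / (4 * c)) * (1 + (lam ^ (3 / (4*c) - 1) *
      |(|(u+w).1| ^ c + |(u+w).2.1| ^ c + |(u+w).2.2| ^ c) - lam|) ^ 10)⁻¹)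
  have hco : (u+w).1 = u.1 + w.1 ∧ (u+w).2.1 = u.2.1 + w.2.1 ∧ (u+w).2.2 = u.2.2 + w.2.2 :=
    ⟨rfl, rfl, rfl⟩
  rw [hco.1, hco.2.1, hco.2.2, ← hκ, ← hB'def]
  calc lam ^ (-(9:ℝ) / (4 * c)) * (1 + B ^ 10)⁻¹
      ≤ lam ^ (-(9:ℝ) / (4 * c)) * (Ccomp c * (1 + B' ^ 10)⁻¹) :=
        mul_le_mul_of_nonneg_left hinv hpre
    _ = Ccomp c * (lam ^ (-(9:ℝ) / (4 * c)) * (1 + B' ^ 10)⁻¹) := by ring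

def cube (z : ℤ × ℤ × ℤ) : Set (ℝ × ℝ × ℝ) :=
  Set.Ico ((z.1:ℝ) - 1/2) ((z.1:ℝ) + 1/2) ×ˢ
    (Set.Ico ((z.2.1:ℝ) - 1/2) ((z.2.1:ℝ) + 1/2) ×ˢ
      Set.Ico ((z.2.2:ℝ) - 1/2) ((z.2.2:ℝ) + 1/2))

lemma mem_cube {z : ℤ × ℤ × ℤ} {y : ℝ × ℝ × ℝ} :
    y ∈ cube z ↔ ((z.1:ℝ) - 1/2 ≤ y.1 ∧ y.1 < (z.1:ℝ) + 1/2) ∧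
      ((z.2.1:ℝ) - 1/2 ≤ y.2.1 ∧ y.2.1 < (z.2.1:ℝ) + 1/2) ∧
      ((z.2.2:ℝ) - 1/2 ≤ y.2.2 ∧ y.2.2 < (z.2.2:ℝ) + 1/2) := by
  simp [cube, Set.mem_prod, Set.mem_Ico]

lemma measurableSet_cube (z : ℤ × ℤ × ℤ) : MeasurableSet (cube z) :=
  measurableSet_Ico.prod (measurableSet_Ico.prod measurableSet_Ico)

lemma volume_cube (z : ℤ × ℤ × ℤ) : volume (cube z) = 1 := by
  rw [cube, Measure.volume_eq_prod, Measure.prod_prod, Measure.volume_eq_prod,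
    Measure.prod_prod, Real.volume_Ico, Real.volume_Ico, Real.volume_Ico]
  norm_num

lemma int_coord_unique {m n : ℤ} {a : ℝ} (h1 : (m:ℝ) - 1/2 ≤ a) (h2 : a < (m:ℝ) + 1/2)
    (h3 : (n:ℝ) - 1/2 ≤ a) (h4 : a < (n:ℝ) + 1/2) : m = n := by
  have e1 : (m:ℝ) < n + 1 := by linarith
  have e2 : (n:ℝ) < m + 1 := by linarith
  have f1 : m < n + 1 := by exact_mod_cast e1
  have f2 : n < m + 1 := by exact_mod_cast e2
  omega

lemma cube_unique {z z' : ℤ × ℤ × ℤ} {y : ℝ × ℝ × ℝ} (h : y ∈ cube z) (h' : y ∈ cube z') :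
    z = z' := by
  rw [mem_cube] at h h'
  obtain ⟨⟨a1, a2⟩, ⟨b1, b2⟩, c1, c2⟩ := h
  obtain ⟨⟨a1', a2'⟩, ⟨b1', b2'⟩, c1', c2'⟩ := h'
  exact Prod.ext (int_coord_unique a1 a2 a1' a2')
    (Prod.ext (int_coord_unique b1 b2 b1' b2') (int_coord_unique c1 c2 c1' c2'))

lemma cube_cover (y : ℝ × ℝ × ℝ) : ∃ z : ℤ × ℤ × ℤ, y ∈ cube z := by
  refine ⟨(⌊y.1 + 1/2⌋, ⌊y.2.1 + 1/2⌋, ⌊y.2.2 + 1/2⌋), ?_⟩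
  rw [mem_cube]
  refine ⟨⟨?_, ?_⟩, ⟨?_, ?_⟩, ?_, ?_⟩ <;>
    [skip; skip; skip; skip; skip; skip] <;>
    first
    | (have := Int.floor_le (y.1 + 1/2); have := Int.lt_floor_add_one (y.1 + 1/2);
        push_cast at *; linarith)
    | (have := Int.floor_le (y.2.1 + 1/2); have := Int.lt_floor_add_one (y.2.1 + 1/2);
        push_cast at *; linarith)
    | (have := Int.floor_le (y.2.2 + 1/2); have := Int.lt_floor_add_one (y.2.2 + 1/2);
        push_cast at *; linarith)

lemma cube_iUnion : (⋃ z : ℤ × ℤ × ℤ, cube z) = Set.univ := by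
  ext y; simp only [Set.mem_iUnion, Set.mem_univ, iff_true]; exact cube_cover y

lemma cube_disjoint : Pairwise (Function.onFun Disjoint cube) := by
  intro z z' hne
  rw [Function.onFun, Set.disjoint_left]
  intro y hy hy'
  exact hne (cube_unique hy hy')
lemma majorKernel_nonneg {c lam : ℝ} (hlam : 0 ≤ lam) (x : ℝ × ℝ × ℝ) :
    0 ≤ majorKernel c lam x := by
  unfold majorKernel
  apply mul_nonneg (Real.rpow_nonneg hlam _)
  apply inv_nonneg.2
  positivity

lemma latticeExtension_eq (f : ℤ × ℤ × ℤ → ℂ) {z : ℤ × ℤ × ℤ} {y : ℝ × ℝ × ℝ}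
    (hy : y ∈ cube z) : latticeExtension f y = f z := by
  have cond_iff : ∀ z' : ℤ × ℤ × ℤ,
      ((-(1 : ℝ) / 2 ≤ y.1 - (z'.1 : ℝ) ∧ y.1 - (z'.1 : ℝ) < 1 / 2) ∧
        (-(1 : ℝ) / 2 ≤ y.2.1 - (z'.2.1 : ℝ) ∧ y.2.1 - (z'.2.1 : ℝ) < 1 / 2) ∧
        (-(1 : ℝ) / 2 ≤ y.2.2 - (z'.2.2 : ℝ) ∧ y.2.2 - (z'.2.2 : ℝ) < 1 / 2)) ↔
      y ∈ cube z' := by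
    intro z'
    rw [mem_cube]
    constructor <;> rintro ⟨⟨a1, a2⟩, ⟨b1, b2⟩, c1, c2⟩ <;>
      exact ⟨⟨by linarith, by linarith⟩, ⟨by linarith, by linarith⟩, by linarith, by linarith⟩
  rw [latticeExtension, tsum_eq_single z]
  · rw [if_pos ((cond_iff z).2 hy)]
  · intro z' hne
    rw [if_neg]
    intro hcond
    exact hne (cube_unique ((cond_iff z').1 hcond) hy)


/-- Lemma `norm`, the comparison principle. For `c ≥ 1` and
`p ∈ [1,∞]`, for any `𝕀 ⊆ [1,∞)` and any `f : ℤ³ → ℂ`,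
`‖sup_{λ∈𝕀} |K_λ ∗ f|‖_{ℓ^p(ℤ³)} ≤ C ‖sup_{λ∈𝕀} K_λ ∗ |F_f|‖_{L^p(ℝ³)}`. -/
theorem discrete_continuous_comparison
    (c : ℝ) (hc : 1 ≤ c) (p : ENNReal) (hp : 1 ≤ p) :
    ∃ C : ℝ, 0 < C ∧ ∀ I : Set ℝ, I ⊆ Set.Ici 1 → ∀ f : ℤ × ℤ × ℤ → ℂ,
      lpNormE (fun x : ℤ × ℤ × ℤ =>
          ⨆ lam ∈ I,
            (‖∑' y : ℤ × ℤ × ℤ,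
                ((majorKernel c lam
                    (((x.1 - y.1 : ℤ) : ℝ), ((x.2.1 - y.2.1 : ℤ) : ℝ),
                      ((x.2.2 - y.2.2 : ℤ) : ℝ)) : ℝ) : ℂ) * f y‖₊ : ENNReal))
        p Measure.count
      ≤ ENNReal.ofReal C *
        lpNormE (fun x : ℝ × ℝ × ℝ =>
            ⨆ lam ∈ I,
              ∫⁻ y : ℝ × ℝ × ℝ,
                ENNReal.ofReal (majorKernel c lam (x - y)) *
                  (‖latticeExtension f y‖₊ : ENNReal))
          p volume := by
  refine ⟨Ccomp c, Ccomp_pos hc, ?_⟩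
  intro I hI f
  have hC : (0:ℝ) < Ccomp c := Ccomp_pos hc
  have hC0 : ENNReal.ofReal (Ccomp c) ≠ 0 := ne_of_gt (ENNReal.ofReal_pos.2 hC)
  have hCtop : ENNReal.ofReal (Ccomp c) ≠ ⊤ := ENNReal.ofReal_ne_top
  set g : ℤ × ℤ × ℤ → ℝ≥0∞ := fun x =>
    ⨆ lam ∈ I,
      (‖∑' y : ℤ × ℤ × ℤ,
          ((majorKernel c lam
              (((x.1 - y.1 : ℤ) : ℝ), ((x.2.1 - y.2.1 : ℤ) : ℝ),
                ((x.2.2 - y.2.2 : ℤ) : ℝ)) : ℝ) : ℂ) * f y‖₊ : ENNReal) with hg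
  set G : ℝ × ℝ × ℝ → ℝ≥0∞ := fun t =>
    ⨆ lam ∈ I,
      ∫⁻ y : ℝ × ℝ × ℝ,
        ENNReal.ofReal (majorKernel c lam (t - y)) *
          (‖latticeExtension f y‖₊ : ENNReal) with hG
  -- Pointwise comparison claim
  have claimA : ∀ (x : ℤ × ℤ × ℤ) (t : ℝ × ℝ × ℝ), t ∈ cube x →
      g x ≤ ENNReal.ofReal (Ccomp c) * G t := by
    intro x t ht
    simp only [hg, hG]
    refine iSup₂_le fun lam hlam => ?_
    have hlam1 : (1:ℝ) ≤ lam := hI hlam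
    have hlam0 : (0:ℝ) ≤ lam := by linarith
    set Kd : ℤ × ℤ × ℤ → ℝ := fun z => majorKernel c lam
      (((x.1 - z.1 : ℤ) : ℝ), ((x.2.1 - z.2.1 : ℤ) : ℝ), ((x.2.2 - z.2.2 : ℤ) : ℝ)) with hKd
    have hKd0 : ∀ z, 0 ≤ Kd z := fun z => majorKernel_nonneg hlam0 _
    have step1 : (‖∑' y : ℤ × ℤ × ℤ, ((Kd y : ℝ) : ℂ) * f y‖₊ : ℝ≥0∞) ≤
        ∑' y : ℤ × ℤ × ℤ, ENNReal.ofReal (Kd y) * (‖f y‖₊ : ℝ≥0∞) := by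
      have hpt : ∀ y, (‖((Kd y : ℝ) : ℂ) * f y‖₊ : ℝ≥0∞) =
          ENNReal.ofReal (Kd y) * (‖f y‖₊ : ℝ≥0∞) := by
        intro y
        rw [nnnorm_mul, ENNReal.coe_mul, Complex.nnnorm_real]
        exact congrArg (· * _) (Real.enorm_eq_ofReal (hKd0 y))
      by_cases hs : Summable fun y : ℤ × ℤ × ℤ => ‖((Kd y : ℝ) : ℂ) * f y‖₊
      · calc (‖∑' y : ℤ × ℤ × ℤ, ((Kd y : ℝ) : ℂ) * f y‖₊ : ℝ≥0∞)
            ≤ ((∑' y : ℤ × ℤ × ℤ, ‖((Kd y : ℝ) : ℂ) * f y‖₊ : ℝ≥0) : ℝ≥0∞) :=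
              ENNReal.coe_le_coe.2 (nnnorm_tsum_le hs)
          _ = ∑' y : ℤ × ℤ × ℤ, (‖((Kd y : ℝ) : ℂ) * f y‖₊ : ℝ≥0∞) := ENNReal.coe_tsum hs
          _ = _ := tsum_congr hpt
      · have htop : (∑' y : ℤ × ℤ × ℤ, ENNReal.ofReal (Kd y) * (‖f y‖₊ : ℝ≥0∞)) = ⊤ := by
          rw [← tsum_congr hpt]
          by_contra hne
          exact hs (ENNReal.tsum_coe_ne_top_iff_summable.1 hne)
        rw [htop]; exact le_top
    -- per-cube lower bound for the continuous convolution
    have key : ∀ z : ℤ × ℤ × ℤ, ENNReal.ofReal (Kd z / Ccomp c) * (‖f z‖₊ : ℝ≥0∞) ≤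
        ∫⁻ y in cube z, ENNReal.ofReal (majorKernel c lam (t - y)) *
          (‖latticeExtension f y‖₊ : ℝ≥0∞) := by
      intro z
      have hptw : ∀ y ∈ cube z, ENNReal.ofReal (Kd z / Ccomp c) * (‖f z‖₊ : ℝ≥0∞) ≤
          ENNReal.ofReal (majorKernel c lam (t - y)) * (‖latticeExtension f y‖₊ : ℝ≥0∞) := by
        intro y hy
        rw [latticeExtension_eq f hy]
        refine mul_le_mul_left (ENNReal.ofReal_le_ofReal ?_) _
        set u : ℝ × ℝ × ℝ :=
          (((x.1 - z.1 : ℤ) : ℝ), ((x.2.1 - z.2.1 : ℤ) : ℝ), ((x.2.2 - z.2.2 : ℤ) : ℝ)) with hu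
        have htc := mem_cube.1 ht
        have hyc := mem_cube.1 hy
        have hw1 : |((t - y) - u).1| ≤ 1 := by
          have he : ((t - y) - u).1 = t.1 - y.1 - ((x.1 - z.1 : ℤ) : ℝ) := rfl
          rw [he, abs_le]
          push_cast
          constructor <;> [linarith [htc.1.1, htc.1.2, hyc.1.1, hyc.1.2];
            linarith [htc.1.1, htc.1.2, hyc.1.1, hyc.1.2]]
        have hw2 : |((t - y) - u).2.1| ≤ 1 := by
          have he : ((t - y) - u).2.1 = t.2.1 - y.2.1 - ((x.2.1 - z.2.1 : ℤ) : ℝ) := rfl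
          rw [he, abs_le]
          push_cast
          constructor <;> [linarith [htc.2.1.1, htc.2.1.2, hyc.2.1.1, hyc.2.1.2];
            linarith [htc.2.1.1, htc.2.1.2, hyc.2.1.1, hyc.2.1.2]]
        have hw3 : |((t - y) - u).2.2| ≤ 1 := by
          have he : ((t - y) - u).2.2 = t.2.2 - y.2.2 - ((x.2.2 - z.2.2 : ℤ) : ℝ) := rfl
          rw [he, abs_le]
          push_cast
          constructor <;> [linarith [htc.2.2.1, htc.2.2.2, hyc.2.2.1, hyc.2.2.2];
            linarith [htc.2.2.1, htc.2.2.2, hyc.2.2.1, hyc.2.2.2]]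
        have hcomp := majorKernel_comp hc hlam1 u ((t - y) - u) hw1 hw2 hw3
        rw [show u + ((t - y) - u) = t - y by abel] at hcomp
        rw [div_le_iff₀ hC]
        calc Kd z ≤ Ccomp c * majorKernel c lam (t - y) := hcomp
          _ = majorKernel c lam (t - y) * Ccomp c := mul_comm _ _
      calc ENNReal.ofReal (Kd z / Ccomp c) * (‖f z‖₊ : ℝ≥0∞)
          = (ENNReal.ofReal (Kd z / Ccomp c) * (‖f z‖₊ : ℝ≥0∞)) * volume (cube z) := by
            rw [volume_cube, mul_one]
        _ = ∫⁻ _ in cube z, ENNReal.ofReal (Kd z / Ccomp c) * (‖f z‖₊ : ℝ≥0∞) :=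
            (setLIntegral_const _ _).symm
        _ ≤ _ := setLIntegral_mono' (measurableSet_cube z) hptw
    have hsplit : (∫⁻ y : ℝ × ℝ × ℝ, ENNReal.ofReal (majorKernel c lam (t - y)) *
        (‖latticeExtension f y‖₊ : ℝ≥0∞)) =
        ∑' z : ℤ × ℤ × ℤ, ∫⁻ y in cube z, ENNReal.ofReal (majorKernel c lam (t - y)) *
          (‖latticeExtension f y‖₊ : ℝ≥0∞) := by
      rw [← setLIntegral_univ, ← cube_iUnion,
        lintegral_iUnion measurableSet_cube cube_disjoint]
    have h2 : (∑' z : ℤ × ℤ × ℤ, ENNReal.ofReal (Kd z / Ccomp c) * (‖f z‖₊ : ℝ≥0∞)) ≤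
        ∫⁻ y : ℝ × ℝ × ℝ, ENNReal.ofReal (majorKernel c lam (t - y)) *
          (‖latticeExtension f y‖₊ : ℝ≥0∞) := by
      rw [hsplit]; exact ENNReal.tsum_le_tsum key
    have h3 : ∀ z : ℤ × ℤ × ℤ, ENNReal.ofReal (Kd z / Ccomp c) * (‖f z‖₊ : ℝ≥0∞) =
        (ENNReal.ofReal (Ccomp c))⁻¹ * (ENNReal.ofReal (Kd z) * (‖f z‖₊ : ℝ≥0∞)) := by
      intro z
      rw [ENNReal.ofReal_div_of_pos hC, div_eq_mul_inv,
        mul_comm (ENNReal.ofReal (Kd z)) _, mul_assoc]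
    have chain : (‖∑' y : ℤ × ℤ × ℤ, ((Kd y : ℝ) : ℂ) * f y‖₊ : ℝ≥0∞) ≤
        ENNReal.ofReal (Ccomp c) * ∫⁻ y : ℝ × ℝ × ℝ,
          ENNReal.ofReal (majorKernel c lam (t - y)) *
            (‖latticeExtension f y‖₊ : ℝ≥0∞) := by
      calc (‖∑' y : ℤ × ℤ × ℤ, ((Kd y : ℝ) : ℂ) * f y‖₊ : ℝ≥0∞)
          ≤ ∑' y : ℤ × ℤ × ℤ, ENNReal.ofReal (Kd y) * (‖f y‖₊ : ℝ≥0∞) := step1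
        _ = ENNReal.ofReal (Ccomp c) * ((ENNReal.ofReal (Ccomp c))⁻¹ *
            ∑' y : ℤ × ℤ × ℤ, ENNReal.ofReal (Kd y) * (‖f y‖₊ : ℝ≥0∞)) := by
            rw [← mul_assoc, ENNReal.mul_inv_cancel hC0 hCtop, one_mul]
        _ = ENNReal.ofReal (Ccomp c) *
            ∑' y : ℤ × ℤ × ℤ, ENNReal.ofReal (Kd y / Ccomp c) * (‖f y‖₊ : ℝ≥0∞) := by
            rw [← ENNReal.tsum_mul_left]
            exact congrArg _ (tsum_congr fun z => (h3 z).symm)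
        _ ≤ _ := mul_le_mul_right h2 _
    exact chain.trans (mul_le_mul_right (le_biSup
      (fun lam => ∫⁻ y : ℝ × ℝ × ℝ, ENNReal.ofReal (majorKernel c lam (t - y)) *
        (‖latticeExtension f y‖₊ : ℝ≥0∞)) hlam) _)
  -- now the Lp comparison
  by_cases hptop : p = ⊤
  · subst hptop
    rw [lpNormE, lpNormE, if_pos rfl, if_pos rfl]
    refine essSup_le_of_ae_le _ (ae_of_all _ fun x => ?_)
    have hae := ae_le_essSup (f := G) (μ := volume)
    rw [ae_iff] at hae
    have hex : ∃ t ∈ cube x, G t ≤ essSup G volume := by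
      by_contra hcon
      push_neg at hcon
      have hsub : cube x ⊆ {y | ¬ G y ≤ essSup G volume} := fun y hy =>
        not_le.2 (hcon y hy)
      have hle := measure_mono (μ := volume) hsub
      rw [hae, volume_cube] at hle
      simp at hle
    obtain ⟨t, htc, hts⟩ := hex
    exact (claimA x t htc).trans (mul_le_mul_right hts _)
  · rw [lpNormE, lpNormE, if_neg hptop, if_neg hptop]
    have hp0 : p ≠ 0 := by
      intro h; rw [h] at hp; simp at hp
    have hpr : 0 < p.toReal := ENNReal.toReal_pos hp0 hptop
    have hpr0 : (0:ℝ) ≤ p.toReal := hpr.le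
    have main : (∫⁻ x, g x ^ p.toReal ∂Measure.count) ≤
        (ENNReal.ofReal (Ccomp c)) ^ p.toReal * ∫⁻ t, G t ^ p.toReal := by
      rw [lintegral_count]
      have perx : ∀ x : ℤ × ℤ × ℤ, g x ^ p.toReal ≤
          ∫⁻ t in cube x, (ENNReal.ofReal (Ccomp c) * G t) ^ p.toReal := by
        intro x
        calc g x ^ p.toReal = g x ^ p.toReal * volume (cube x) := by
              rw [volume_cube, mul_one]
          _ = ∫⁻ _ in cube x, g x ^ p.toReal := (setLIntegral_const _ _).symm
          _ ≤ _ := setLIntegral_mono' (measurableSet_cube x)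
              (fun t ht => ENNReal.rpow_le_rpow (claimA x t ht) hpr0)
      calc (∑' x : ℤ × ℤ × ℤ, g x ^ p.toReal)
          ≤ ∑' x : ℤ × ℤ × ℤ, ∫⁻ t in cube x,
              (ENNReal.ofReal (Ccomp c) * G t) ^ p.toReal := ENNReal.tsum_le_tsum perx
        _ = ∫⁻ t, (ENNReal.ofReal (Ccomp c) * G t) ^ p.toReal := by
            rw [← lintegral_iUnion measurableSet_cube cube_disjoint, cube_iUnion,
              setLIntegral_univ]
        _ = ∫⁻ t, (ENNReal.ofReal (Ccomp c)) ^ p.toReal * G t ^ p.toReal := by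
            simp_rw [ENNReal.mul_rpow_of_nonneg _ _ hpr0]
        _ = (ENNReal.ofReal (Ccomp c)) ^ p.toReal * ∫⁻ t, G t ^ p.toReal :=
            lintegral_const_mul' _ _ (by
              exact ENNReal.rpow_ne_top_of_nonneg hpr0 hCtop)
    calc (∫⁻ x, g x ^ p.toReal ∂Measure.count) ^ (1 / p.toReal)
        ≤ ((ENNReal.ofReal (Ccomp c)) ^ p.toReal * ∫⁻ t, G t ^ p.toReal) ^ (1 / p.toReal) :=
          ENNReal.rpow_le_rpow main (by positivity)
      _ = ENNReal.ofReal (Ccomp c) * (∫⁻ t, G t ^ p.toReal) ^ (1 / p.toReal) := by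
          rw [ENNReal.mul_rpow_of_nonneg _ _ (by positivity : (0:ℝ) ≤ 1 / p.toReal),
            ← ENNReal.rpow_mul, mul_one_div_cancel (ne_of_gt hpr), ENNReal.rpow_one]
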